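/- Suppose the flow φ on compact M is expansive with constant δ, meaning: for x, x' not on the same orbit of the centralizer of the generator, there exists t with dist(φ_t(x), φ_t(x')) ≥ δ. Suppose h_M : M × ℝ/ℤ → M is uniformly continuous and satisfies φ_t(h_M(x,θ)) = h_M(φ_t(x), θ + c(x,t)) for a function c independent of θ. Then for θ, θ' sufficiently close (depending only on the modulus of continuity of h_M and δ), the points h_M(x,θ) and h_M(x,θ') lie on the same centralizer orbit. -/

import Mathlib

/-- Suppose the flow `φ` on a compact metric space `M` is expansive with constant `δ`, in
the reformulated sense that any two points whose orbits stay at distance `< δ` for all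
times lie on the same centralizer orbit (an equivalence relation `E` on `M`).  Suppose
`h_M : M × ℝ/ℤ → M` is uniformly continuous and satisfies
`φ_t(h_M(x,θ)) = h_M(φ_t(x), θ + c(x,t))` for a function `c` independent of `θ`.  Then
there is `η > 0` such that whenever `θ, θ'` are at distance `< η`, the points `h_M(x,θ)`
and `h_M(x,θ')` lie on the same centralizer orbit. -/
theorem stmt13 {M : Type*} [MetricSpace M] [CompactSpace M] (φ : Flow ℝ M)
    (E : M → M → Prop) (hEquiv : Equivalence E) (δ : ℝ) (hδ : 0 < δ)
    (hexp : ∀ x x' : M, (∀ t : ℝ, dist (φ t x) (φ t x') < δ) → E x x')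
    (hM : M × AddCircle (1 : ℝ) → M) (hMuc : UniformContinuous hM)
    (c : M → ℝ → ℝ)
    (heq : ∀ (t : ℝ) (x : M) (θ : AddCircle (1 : ℝ)),
      φ t (hM (x, θ)) = hM (φ t x, θ + ((c x t : ℝ) : AddCircle (1 : ℝ)))) :
    ∃ η > (0 : ℝ), ∀ (x : M) (θ θ' : AddCircle (1 : ℝ)),
      dist θ θ' < η → E (hM (x, θ)) (hM (x, θ')) := by
  obtain ⟨η, hη, h⟩ := Metric.uniformContinuous_iff.mp hMuc δ hδ
  refine ⟨η, hη, fun x θ θ' hθ => ?_⟩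
  apply hexp
  intro t
  rw [heq, heq]
  apply h
  rw [Prod.dist_eq]
  simpa [hη] using hθ
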